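/- Moment bounds for the normalized averaged noise (claim (A.44) in the proof of Lemma D.1). Let n, T be positive integers, rho in (0,1], and let w^{(1)}, ..., w^{(T)} be i.i.d. real random variables with E(w^{(t)}) = 0, |w^{(t)}| <= 1 almost surely, and E( (w^{(t)})^2 ) <= rho. Set q = sqrt(n rho) and w~ = ( sqrt(T) q )^{-1} sum_{t=1}^T w^{(t)}. Then E( w~^2 ) <= 1/n, and for every integer k >= 3 there exists a constant C_k depending only on k such that E( |w~|^k ) <= C_k ( n^{-1} ( T q^2 )^{-(k-2)/2} + n^{-1} n^{-(k-2)/2} ). -/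

import Mathlib

open MeasureTheory ProbabilityTheory Finset

namespace AvgNoiseAux

noncomputable def rosC : ℕ → ℝ
  | 0 => 1
  | m + 1 => 4 ^ (m + 1) * (1 + 2 * rosC m)

lemma rosC_pos (m : ℕ) : 0 < rosC m := by
  induction m with
  | zero => norm_num [rosC]
  | succ m ih => rw [rosC]; positivity

lemma abs_pow_le_one_add (x : ℝ) {j p : ℕ} (hj : j ≤ p) (hp : Even p) :
    |x| ^ j ≤ 1 + x ^ p := by
  have hxp : 0 ≤ x ^ p := hp.pow_nonneg x
  rcases le_total |x| 1 with h | h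
  · have : |x| ^ j ≤ 1 := pow_le_one₀ (abs_nonneg x) h
    linarith
  · have h1 : |x| ^ j ≤ |x| ^ p := pow_le_pow_right₀ h hj
    have h2 : |x| ^ p = x ^ p := hp.pow_abs x
    linarith

lemma amgm {l : ℝ} (hl : 0 < l) (a b : ℝ) : a * b ≤ (l * a ^ 2 + l⁻¹ * b ^ 2) / 2 := by
  have h := mul_nonneg hl.le (sq_nonneg (l * a - b))
  have hinv : l * l⁻¹ = 1 := mul_inv_cancel₀ hl.ne'
  have hinv0 : 0 ≤ l⁻¹ := inv_nonneg.2 hl.le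
  nlinarith [sq_nonneg (l * a - b), mul_pos hl hl]

lemma sq_le_pow_add {x : ℝ} (hx : 0 ≤ x) {m : ℕ} (hm : 1 ≤ m) : x ^ 2 ≤ x ^ (m + 1) + x := by
  rcases le_total x 1 with h | h
  · have h1 : x ^ 2 ≤ x := by nlinarith
    have h2 : (0:ℝ) ≤ x ^ (m+1) := pow_nonneg hx _
    linarith
  · have h1 : x ^ 2 ≤ x ^ (m+1) := pow_le_pow_right₀ h (by omega)
    linarith

variable {Ω : Type} [MeasurableSpace Ω] {μ : Measure Ω} [IsProbabilityMeasure μ]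
  {T : ℕ} {ρ : ℝ} {w : Fin T → Ω → ℝ}

lemma int_of_bdd {f : Ω → ℝ} (hf : Measurable f) {C : ℝ} (h : ∀ᵐ ω ∂μ, |f ω| ≤ C) :
    Integrable f μ :=
  (integrable_const C).mono' hf.aestronglyMeasurable
    (by filter_upwards [h] with ω hω; simpa [Real.norm_eq_abs] using hω)

lemma S_meas (hmeas : ∀ t, Measurable (w t)) (s : Finset (Fin T)) :
    Measurable fun ω => ∑ t ∈ s, w t ω :=
  Finset.measurable_sum s fun t _ => hmeas t

lemma S_bdd (hbdd : ∀ t, ∀ᵐ ω ∂μ, |w t ω| ≤ 1) (s : Finset (Fin T)) :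
    ∀ᵐ ω ∂μ, |∑ t ∈ s, w t ω| ≤ (s.card : ℝ) := by
  have h := ae_all_iff.2 hbdd
  filter_upwards [h] with ω hω
  calc |∑ t ∈ s, w t ω| ≤ ∑ t ∈ s, |w t ω| := Finset.abs_sum_le_sum_abs _ _
    _ ≤ ∑ _t ∈ s, (1:ℝ) := Finset.sum_le_sum fun t _ => hω t
    _ = s.card := by simp

lemma int_Sp (hmeas : ∀ t, Measurable (w t)) (hbdd : ∀ t, ∀ᵐ ω ∂μ, |w t ω| ≤ 1)
    (s : Finset (Fin T)) (p : ℕ) :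
    Integrable (fun ω => (∑ t ∈ s, w t ω) ^ p) μ := by
  apply int_of_bdd ((S_meas hmeas s).pow_const p) (C := (s.card : ℝ) ^ p)
  filter_upwards [S_bdd hbdd s] with ω h1
  rw [abs_pow]
  exact pow_le_pow_left₀ (abs_nonneg _) h1 p

lemma int_absSp (hmeas : ∀ t, Measurable (w t)) (hbdd : ∀ t, ∀ᵐ ω ∂μ, |w t ω| ≤ 1)
    (s : Finset (Fin T)) (p : ℕ) :
    Integrable (fun ω => |∑ t ∈ s, w t ω| ^ p) μ := by
  apply int_of_bdd ((S_meas hmeas s).abs.pow_const p) (C := (s.card : ℝ) ^ p)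
  filter_upwards [S_bdd hbdd s] with ω h1
  rw [abs_pow, abs_abs]
  exact pow_le_pow_left₀ (abs_nonneg _) h1 p

lemma int_Wq (hmeas : ∀ t, Measurable (w t)) (hbdd : ∀ t, ∀ᵐ ω ∂μ, |w t ω| ≤ 1)
    (a : Fin T) (q : ℕ) : Integrable (fun ω => (w a ω) ^ q) μ := by
  apply int_of_bdd ((hmeas a).pow_const q) (C := 1)
  filter_upwards [hbdd a] with ω h1
  rw [abs_pow]
  exact pow_le_one₀ (abs_nonneg _) h1

lemma int_SpWq (hmeas : ∀ t, Measurable (w t)) (hbdd : ∀ t, ∀ᵐ ω ∂μ, |w t ω| ≤ 1)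
    (s : Finset (Fin T)) (a : Fin T) (p q : ℕ) :
    Integrable (fun ω => (∑ t ∈ s, w t ω) ^ p * (w a ω) ^ q) μ := by
  apply int_of_bdd (((S_meas hmeas s).pow_const p).mul ((hmeas a).pow_const q))
    (C := (s.card : ℝ) ^ p * 1)
  filter_upwards [S_bdd hbdd s, hbdd a] with ω h1 h2
  simp only [Pi.mul_apply]
  rw [abs_mul, abs_pow, abs_pow]
  exact mul_le_mul (pow_le_pow_left₀ (abs_nonneg _) h1 p)
    (pow_le_one₀ (abs_nonneg _) h2) (pow_nonneg (abs_nonneg _) _) (by positivity)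

lemma moment_w (hρ : 0 ≤ ρ) (hmeas : ∀ t, Measurable (w t))
    (hbdd : ∀ t, ∀ᵐ ω ∂μ, |w t ω| ≤ 1) (hvar : ∀ t, ∫ ω, (w t ω) ^ 2 ∂μ ≤ ρ)
    (a : Fin T) {q : ℕ} (hq : 2 ≤ q) : |∫ ω, (w a ω) ^ q ∂μ| ≤ ρ := by
  have h1 : |∫ ω, (w a ω) ^ q ∂μ| ≤ ∫ ω, |(w a ω) ^ q| ∂μ := by
    simpa [Real.norm_eq_abs] using norm_integral_le_integral_norm (fun ω => (w a ω) ^ q) (μ := μ)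
  have h2 : ∫ ω, |(w a ω) ^ q| ∂μ ≤ ∫ ω, (w a ω) ^ 2 ∂μ := by
    apply integral_mono_ae ((int_Wq hmeas hbdd a q).abs) (int_Wq hmeas hbdd a 2)
    filter_upwards [hbdd a] with ω hω
    rw [abs_pow]
    calc |w a ω| ^ q ≤ |w a ω| ^ 2 := pow_le_pow_of_le_one (abs_nonneg _) hω hq
      _ = (w a ω) ^ 2 := sq_abs _
  exact h1.trans (h2.trans (hvar a))

lemma moment_rec (hρ : 0 ≤ ρ) (hmeas : ∀ t, Measurable (w t))
    (hindep : iIndepFun w μ)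
    (hmean : ∀ t, ∫ ω, w t ω ∂μ = 0)
    (hbdd : ∀ t, ∀ᵐ ω ∂μ, |w t ω| ≤ 1)
    (hvar : ∀ t, ∫ ω, (w t ω) ^ 2 ∂μ ≤ ρ)
    (m : ℕ) (hm : 1 ≤ m) (B : ℕ → ℝ) (hB0 : ∀ c, 0 ≤ B c) (hBmono : Monotone B)
    (hIH : ∀ s : Finset (Fin T), ∫ ω, (∑ t ∈ s, w t ω) ^ (2*m - 2) ∂μ ≤ B s.card) :
    ∀ s : Finset (Fin T),
      ∫ ω, (∑ t ∈ s, w t ω) ^ (2*m) ∂μ ≤ 4 ^ m * s.card * ρ * (1 + B s.card) := by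
  classical
  intro s
  induction s using Finset.induction_on with
  | empty =>
    simp only [Finset.sum_empty, Finset.card_empty, Nat.cast_zero]
    rw [zero_pow (by omega : 2*m ≠ 0), integral_zero]
    have := hB0 0
    nlinarith [pow_pos (show (0:ℝ) < 4 by norm_num) m]
  | @insert a s ha ih =>
    set f : Ω → ℝ := fun ω => ∑ t ∈ s, w t ω with hf
    have hfa : IndepFun f (w a) μ := by
      have h := hindep.indepFun_finsetSum_of_notMem hmeas ha
      have he : (∑ j ∈ s, w j) = f := by funext ω; simp [hf]
      rwa [he] at h
    have hkey : ∀ p q : ℕ, ∫ ω, f ω ^ p * w a ω ^ q ∂μ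
        = (∫ ω, f ω ^ p ∂μ) * ∫ ω, w a ω ^ q ∂μ := by
      intro p q
      have h1 : IndepFun (fun ω => f ω ^ p) (fun ω => w a ω ^ q) μ :=
        hfa.comp (measurable_id.pow_const p) (measurable_id.pow_const q)
      exact h1.integral_fun_mul_eq_mul_integral (int_Sp hmeas hbdd s p).aestronglyMeasurable (int_Wq hmeas hbdd a q).aestronglyMeasurable
    have hexp : ∀ ω, (∑ t ∈ insert a s, w t ω) ^ (2*m)
        = ∑ j ∈ Finset.range (2*m+1), f ω ^ j * w a ω ^ (2*m - j) * ((2*m).choose j : ℝ) := by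
      intro ω
      rw [Finset.sum_insert ha, add_comm]
      exact add_pow _ _ _
    have hswap : ∫ ω, (∑ t ∈ insert a s, w t ω) ^ (2*m) ∂μ
        = ∑ j ∈ Finset.range (2*m+1),
            (∫ ω, f ω ^ j ∂μ) * (∫ ω, w a ω ^ (2*m - j) ∂μ) * ((2*m).choose j : ℝ) := by
      simp_rw [hexp]
      rw [integral_finset_sum _ (fun j _ => (int_SpWq hmeas hbdd s a j (2*m-j)).mul_const _)]
      refine Finset.sum_congr rfl fun j _ => ?_
      rw [integral_mul_const, hkey]
    set A : ℕ → ℝ := fun j =>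
      (∫ ω, f ω ^ j ∂μ) * (∫ ω, w a ω ^ (2*m - j) ∂μ) * ((2*m).choose j : ℝ) with hA
    have hsplit : ∑ j ∈ Finset.range (2*m+1), A j
        = (∑ j ∈ Finset.range (2*m-1), A j) + A (2*m-1) + A (2*m) := by
      rw [show 2*m+1 = (2*m-1) + 1 + 1 by omega, Finset.sum_range_succ, Finset.sum_range_succ,
        show 2*m-1+1 = 2*m by omega]
    have hAtop : A (2*m) = ∫ ω, f ω ^ (2*m) ∂μ := by
      simp [hA, Nat.sub_self, Nat.choose_self, integral_const, measure_univ]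
    have hAmid : A (2*m-1) = 0 := by
      have h1 : 2*m - (2*m-1) = 1 := by omega
      simp [hA, h1, hmean a]
    have hfbd : ∀ j, j ≤ 2*m - 2 → |∫ ω, f ω ^ j ∂μ| ≤ 1 + B s.card := by
      intro j hj
      have h1 : |∫ ω, f ω ^ j ∂μ| ≤ ∫ ω, |f ω| ^ j ∂μ := by
        have := norm_integral_le_integral_norm (fun ω => f ω ^ j) (μ := μ)
        simpa [Real.norm_eq_abs, abs_pow] using this
      have h2 : ∫ ω, |f ω| ^ j ∂μ ≤ ∫ ω, (1 + f ω ^ (2*m-2)) ∂μ := by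
        apply integral_mono (int_absSp hmeas hbdd s j)
          ((integrable_const 1).add (int_Sp hmeas hbdd s (2*m-2)))
        intro ω
        exact abs_pow_le_one_add _ hj ⟨m-1, by omega⟩
      have h3 : ∫ ω, (1 + f ω ^ (2*m-2)) ∂μ = 1 + ∫ ω, f ω ^ (2*m-2) ∂μ := by
        rw [integral_add (integrable_const 1) (int_Sp hmeas hbdd s (2*m-2))]
        simp
        rfl
      have h4 := hIH s
      linarith
    have hsum_le : ∑ j ∈ Finset.range (2*m-1), A j ≤ 4 ^ m * ρ * (1 + B s.card) := by
      have hterm : ∀ j ∈ Finset.range (2*m-1),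
          A j ≤ ((2*m).choose j : ℝ) * (ρ * (1 + B s.card)) := by
        intro j hj
        rw [Finset.mem_range] at hj
        have hj2 : j ≤ 2*m - 2 := by omega
        have hq2 : 2 ≤ 2*m - j := by omega
        have h1 := hfbd j hj2
        have h2 := moment_w hρ hmeas hbdd hvar a hq2
        calc A j ≤ |A j| := le_abs_self _
          _ = |∫ ω, f ω ^ j ∂μ| * |∫ ω, w a ω ^ (2*m-j) ∂μ| * ((2*m).choose j : ℝ) := by
              rw [hA]; rw [abs_mul, abs_mul, Nat.abs_cast]
          _ ≤ (1 + B s.card) * ρ * ((2*m).choose j : ℝ) := by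
              have hb0 : (0:ℝ) ≤ 1 + B s.card := by have := hB0 s.card; linarith
              apply mul_le_mul_of_nonneg_right _ (Nat.cast_nonneg _)
              exact mul_le_mul h1 h2 (abs_nonneg _) hb0
          _ = ((2*m).choose j : ℝ) * (ρ * (1 + B s.card)) := by ring
      calc ∑ j ∈ Finset.range (2*m-1), A j
          ≤ ∑ j ∈ Finset.range (2*m-1), ((2*m).choose j : ℝ) * (ρ * (1 + B s.card)) :=
            Finset.sum_le_sum hterm
        _ = (∑ j ∈ Finset.range (2*m-1), ((2*m).choose j : ℝ)) * (ρ * (1 + B s.card)) := by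
            rw [Finset.sum_mul]
        _ ≤ (4:ℝ) ^ m * (ρ * (1 + B s.card)) := by
            apply mul_le_mul_of_nonneg_right
            · have hs : ∑ j ∈ Finset.range (2*m-1), ((2*m).choose j : ℝ)
                  ≤ ∑ j ∈ Finset.range (2*m+1), ((2*m).choose j : ℝ) := by
                apply Finset.sum_le_sum_of_subset_of_nonneg
                · apply Finset.range_subset_range.2; omega
                · intro j _ _; exact Nat.cast_nonneg _
              have he : ∑ j ∈ Finset.range (2*m+1), ((2*m).choose j : ℝ) = (4:ℝ) ^ m := by
                rw [← Nat.cast_sum]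
                rw [Nat.sum_range_choose]
                rw [pow_mul]
                norm_num
              linarith
            · have := hB0 s.card; positivity
        _ = 4 ^ m * ρ * (1 + B s.card) := by ring
    have hcard : (insert a s).card = s.card + 1 := Finset.card_insert_of_notMem ha
    have hBc : B s.card ≤ B (s.card + 1) := hBmono (by omega)
    have hfin : ∫ ω, (∑ t ∈ insert a s, w t ω) ^ (2*m) ∂μ
        ≤ 4 ^ m * s.card * ρ * (1 + B s.card) + 4 ^ m * ρ * (1 + B s.card) := by
      rw [hswap, hsplit, hAtop, hAmid]
      have := ih
      linarith [hsum_le]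
    rw [hcard]
    push_cast
    have h40 : (0:ℝ) < 4 ^ m := pow_pos (by norm_num) m
    have hc0 : (0:ℝ) ≤ s.card := Nat.cast_nonneg _
    have hb0 : (0:ℝ) ≤ 1 + B s.card := by have := hB0 s.card; linarith
    nlinarith [mul_nonneg (mul_nonneg h40.le hc0) hρ, mul_nonneg h40.le hρ,
      mul_le_mul_of_nonneg_left hBc (mul_nonneg (mul_nonneg h40.le (by linarith : (0:ℝ) ≤ (s.card:ℝ) + 1)) hρ)]

lemma even_moment (hρ : 0 ≤ ρ) (hmeas : ∀ t, Measurable (w t))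
    (hindep : iIndepFun w μ)
    (hmean : ∀ t, ∫ ω, w t ω ∂μ = 0)
    (hbdd : ∀ t, ∀ᵐ ω ∂μ, |w t ω| ≤ 1)
    (hvar : ∀ t, ∫ ω, (w t ω) ^ 2 ∂μ ≤ ρ) :
    ∀ m : ℕ, 1 ≤ m → ∀ s : Finset (Fin T),
      ∫ ω, (∑ t ∈ s, w t ω) ^ (2*m) ∂μ
        ≤ rosC m * (((s.card : ℝ) * ρ) ^ m + (s.card : ℝ) * ρ) := by
  intro m
  induction m with
  | zero => omega
  | succ m ihm =>
    intro _ s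
    rcases Nat.eq_zero_or_pos m with rfl | hm
    · -- base case : second moment
      have h0 : ∀ s : Finset (Fin T), ∫ ω, (∑ t ∈ s, w t ω) ^ (2*1 - 2) ∂μ ≤ 1 := by
        intro s
        norm_num
      have h := moment_rec hρ hmeas hindep hmean hbdd hvar 1 le_rfl (fun _ => 1)
        (fun _ => zero_le_one) monotone_const h0 s
      have hx0 : (0:ℝ) ≤ (s.card : ℝ) * ρ := by positivity
      have : rosC 1 = 12 := by norm_num [rosC]
      rw [this]
      norm_num at h ⊢
      nlinarith
    · set B : ℕ → ℝ := fun c => rosC m * (((c:ℝ) * ρ) ^ m + (c:ℝ) * ρ) with hBdef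
      have hR := rosC_pos m
      have hB0 : ∀ c, 0 ≤ B c := by
        intro c
        have h1 : (0:ℝ) ≤ (c:ℝ)*ρ := by positivity
        have h2 : (0:ℝ) ≤ ((c:ℝ)*ρ)^m := pow_nonneg h1 m
        simp only [hBdef]
        positivity
      have hBmono : Monotone B := by
        intro c d hcd
        have hcast : (c:ℝ) ≤ (d:ℝ) := Nat.cast_le.2 hcd
        apply mul_le_mul_of_nonneg_left _ hR.le
        have h1 : (c:ℝ) * ρ ≤ (d:ℝ) * ρ := mul_le_mul_of_nonneg_right hcast hρ
        have h2 : ((c:ℝ)*ρ)^m ≤ ((d:ℝ)*ρ)^m := pow_le_pow_left₀ (by positivity) h1 m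
        linarith
      have hIH : ∀ s : Finset (Fin T), ∫ ω, (∑ t ∈ s, w t ω) ^ (2*(m+1) - 2) ∂μ ≤ B s.card := by
        intro s
        rw [show 2*(m+1) - 2 = 2*m by omega]
        exact ihm hm s
      have h := moment_rec hρ hmeas hindep hmean hbdd hvar (m+1) (by omega) B hB0 hBmono hIH s
      set x : ℝ := (s.card : ℝ) * ρ with hxdef
      have hx0 : 0 ≤ x := by positivity
      have hx2 : x ^ 2 ≤ x ^ (m+1) + x := sq_le_pow_add hx0 hm
      have heq : (4:ℝ) ^ (m+1) * s.card * ρ * (1 + B s.card)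
          = 4 ^ (m+1) * (x + rosC m * x^(m+1) + rosC m * x^2) := by
        rw [hBdef, hxdef]; ring
      have hgoal : (4:ℝ) ^ (m+1) * (x + rosC m * x^(m+1) + rosC m * x^2)
          ≤ rosC (m+1) * (x^(m+1) + x) := by
        rw [show rosC (m+1) = 4^(m+1) * (1 + 2 * rosC m) from rfl]
        have h40 : (0:ℝ) < 4 ^ (m+1) := pow_pos (by norm_num) _
        have hxm : (0:ℝ) ≤ x^(m+1) := pow_nonneg hx0 _
        have hcore : x + rosC m * x^(m+1) + rosC m * x^2
            ≤ (1 + 2 * rosC m) * (x^(m+1) + x) := by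
          nlinarith [mul_le_mul_of_nonneg_left hx2 hR.le, mul_nonneg hR.le hx0,
            mul_nonneg hR.le hxm]
        calc (4:ℝ)^(m+1) * (x + rosC m * x^(m+1) + rosC m * x^2)
            ≤ 4^(m+1) * ((1 + 2 * rosC m) * (x^(m+1) + x)) :=
              mul_le_mul_of_nonneg_left hcore h40.le
          _ = 4^(m+1) * (1 + 2 * rosC m) * (x^(m+1) + x) := by ring
      rw [heq] at h
      exact h.trans hgoal

lemma var_sum (hmeas : ∀ t, Measurable (w t))
    (hindep : iIndepFun w μ)
    (hmean : ∀ t, ∫ ω, w t ω ∂μ = 0)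
    (hbdd : ∀ t, ∀ᵐ ω ∂μ, |w t ω| ≤ 1) :
    ∫ ω, (∑ t, w t ω) ^ 2 ∂μ = ∑ t, ∫ ω, (w t ω) ^ 2 ∂μ := by
  have hint : ∀ i j : Fin T, Integrable (fun ω => w i ω * w j ω) μ := by
    intro i j
    apply int_of_bdd ((hmeas i).mul (hmeas j)) (C := 1)
    filter_upwards [hbdd i, hbdd j] with ω h1 h2
    simp only [Pi.mul_apply]
    rw [abs_mul]
    calc |w i ω| * |w j ω| ≤ 1 * 1 := mul_le_mul h1 h2 (abs_nonneg _) zero_le_one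
      _ = 1 := one_mul 1
  have hpt : ∀ ω, (∑ t, w t ω) ^ 2 = ∑ i, ∑ j, w i ω * w j ω := by
    intro ω; rw [sq, Finset.sum_mul_sum]
  simp_rw [hpt]
  rw [integral_finset_sum _ (fun i _ => integrable_finset_sum _ (fun j _ => hint i j))]
  refine Finset.sum_congr rfl fun i _ => ?_
  rw [integral_finset_sum _ (fun j _ => hint i j)]
  rw [Finset.sum_eq_single i]
  · simp [pow_two]
  · intro j _ hji
    have hindij : IndepFun (w i) (w j) μ := hindep.indepFun (Ne.symm hji)
    have := hindij.integral_fun_mul_eq_mul_integral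
      (int_of_bdd (hmeas i) (by filter_upwards [hbdd i] with ω h; exact h)).aestronglyMeasurable
      (int_of_bdd (hmeas j) (by filter_upwards [hbdd j] with ω h; exact h)).aestronglyMeasurable
    have h2 : ∫ ω, w i ω * w j ω ∂μ = (∫ ω, w i ω ∂μ) * ∫ ω, w j ω ∂μ := this
    rw [h2, hmean i, zero_mul]
  · intro h; exact absurd (Finset.mem_univ i) h

lemma abs_moment (hρ : 0 ≤ ρ) (hmeas : ∀ t, Measurable (w t))
    (hindep : iIndepFun w μ)
    (hmean : ∀ t, ∫ ω, w t ω ∂μ = 0)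
    (hbdd : ∀ t, ∀ᵐ ω ∂μ, |w t ω| ≤ 1)
    (hvar : ∀ t, ∫ ω, (w t ω) ^ 2 ∂μ ≤ ρ)
    (k : ℕ) (hk : 3 ≤ k) :
    ∫ ω, |∑ t, w t ω| ^ k ∂μ
      ≤ (rosC (k-1) + 2 * rosC 1 + 1) *
          (((T:ℝ) * ρ) ^ ((k:ℝ)/2) + (T:ℝ) * ρ) := by
  set x : ℝ := (T:ℝ) * ρ with hxdef
  have hx0 : 0 ≤ x := by positivity
  have hcard : ((Finset.univ : Finset (Fin T)).card : ℝ) = (T:ℝ) := by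
    simp
  have hA : ∫ ω, (∑ t, w t ω) ^ (2*(k-1)) ∂μ ≤ rosC (k-1) * (x ^ (k-1) + x) := by
    have := even_moment hρ hmeas hindep hmean hbdd hvar (k-1) (by omega) Finset.univ
    rwa [hcard] at this
  have hB : ∫ ω, (∑ t, w t ω) ^ 2 ∂μ ≤ 2 * rosC 1 * x := by
    have := even_moment hρ hmeas hindep hmean hbdd hvar 1 le_rfl Finset.univ
    rw [hcard] at this
    norm_num at this
    rw [hxdef]
    nlinarith
  have hamgm : ∀ l : ℝ, 0 < l →
      ∫ ω, |∑ t, w t ω| ^ k ∂μ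
        ≤ (l * ∫ ω, (∑ t, w t ω) ^ (2*(k-1)) ∂μ + l⁻¹ * ∫ ω, (∑ t, w t ω) ^ 2 ∂μ) / 2 := by
    intro l hl
    have hpt : ∀ ω, |∑ t, w t ω| ^ k
        ≤ (l * (∑ t, w t ω) ^ (2*(k-1)) + l⁻¹ * (∑ t, w t ω) ^ 2) / 2 := by
      intro ω
      set y : ℝ := ∑ t, w t ω
      have h1 : |y| ^ k = |y| ^ (k-1) * |y| := by
        rw [← pow_succ, show k - 1 + 1 = k by omega]
      have h2 : (|y| ^ (k-1)) ^ 2 = y ^ (2*(k-1)) := by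
        rw [← pow_mul, show (k-1) * 2 = 2 * (k-1) by ring]
        exact (even_two_mul (k-1)).pow_abs y
      have h3 : |y| ^ 2 = y ^ 2 := sq_abs y
      have := amgm hl (|y| ^ (k-1)) |y|
      rw [h2, h3] at this
      rw [h1]
      exact this
    have hrhs : Integrable (fun ω => (l * (∑ t, w t ω) ^ (2*(k-1))
        + l⁻¹ * (∑ t, w t ω) ^ 2) / 2) μ := by
      apply Integrable.div_const
      exact ((int_Sp hmeas hbdd Finset.univ (2*(k-1))).const_mul l).add
        ((int_Sp hmeas hbdd Finset.univ 2).const_mul l⁻¹)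
    have hmono := integral_mono (int_absSp hmeas hbdd Finset.univ k) hrhs hpt
    calc ∫ ω, |∑ t, w t ω| ^ k ∂μ
        ≤ ∫ ω, (l * (∑ t, w t ω) ^ (2*(k-1)) + l⁻¹ * (∑ t, w t ω) ^ 2) / 2 ∂μ := hmono
      _ = (l * ∫ ω, (∑ t, w t ω) ^ (2*(k-1)) ∂μ + l⁻¹ * ∫ ω, (∑ t, w t ω) ^ 2 ∂μ) / 2 := by
          rw [integral_div, integral_add (((int_Sp hmeas hbdd Finset.univ (2*(k-1)))).const_mul l)
            ((int_Sp hmeas hbdd Finset.univ 2).const_mul l⁻¹),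
            integral_const_mul, integral_const_mul]
  have hR1 := rosC_pos (k-1)
  have hR2 := rosC_pos 1
  have hxk0 : (0:ℝ) ≤ x ^ ((k:ℝ)/2) := Real.rpow_nonneg hx0 _
  rcases le_total x 1 with hx1 | hx1
  · -- small x : take l = 1
    have h := hamgm 1 one_pos
    rw [one_mul, inv_one, one_mul] at h
    have hxp : x ^ (k-1) ≤ x := by
      calc x ^ (k-1) ≤ x ^ 1 := pow_le_pow_of_le_one hx0 hx1 (by omega)
        _ = x := pow_one x
    have hA' : ∫ ω, (∑ t, w t ω) ^ (2*(k-1)) ∂μ ≤ rosC (k-1) * (2 * x) := by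
      calc ∫ ω, (∑ t, w t ω) ^ (2*(k-1)) ∂μ ≤ rosC (k-1) * (x ^ (k-1) + x) := hA
        _ ≤ rosC (k-1) * (2 * x) := by nlinarith
    calc ∫ ω, |∑ t, w t ω| ^ k ∂μ
        ≤ (rosC (k-1) * (2*x) + 2 * rosC 1 * x) / 2 := by
          have := hamgm 1 one_pos
          rw [one_mul, inv_one, one_mul] at this
          linarith
      _ = (rosC (k-1) + rosC 1) * x := by ring
      _ ≤ (rosC (k-1) + 2 * rosC 1 + 1) * (x ^ ((k:ℝ)/2) + x) := by nlinarith
  · -- large x : take l = x ^ (1 - k/2)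
    have hx0' : (0:ℝ) < x := lt_of_lt_of_le one_pos hx1
    set l : ℝ := x ^ (1 - (k:ℝ)/2) with hldef
    have hl0 : 0 < l := Real.rpow_pos_of_pos hx0' _
    have h := hamgm l hl0
    have hxp : x ≤ x ^ (k-1) := by
      calc x = x ^ 1 := (pow_one x).symm
        _ ≤ x ^ (k-1) := pow_le_pow_right₀ hx1 (by omega)
    have hA' : ∫ ω, (∑ t, w t ω) ^ (2*(k-1)) ∂μ ≤ rosC (k-1) * (2 * x ^ (k-1)) := by
      calc ∫ ω, (∑ t, w t ω) ^ (2*(k-1)) ∂μ ≤ rosC (k-1) * (x ^ (k-1) + x) := hA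
        _ ≤ rosC (k-1) * (2 * x ^ (k-1)) := by nlinarith
    have hlA : l * x ^ (k-1) = x ^ ((k:ℝ)/2) := by
      rw [hldef, ← Real.rpow_natCast x (k-1), ← Real.rpow_add hx0']
      congr 1
      have : ((k-1 : ℕ) : ℝ) = (k:ℝ) - 1 := by
        have : (1:ℕ) ≤ k := by omega
        push_cast [this]
        ring
      rw [this]; ring
    have hlB : l⁻¹ * x = x ^ ((k:ℝ)/2) := by
      rw [hldef, ← Real.rpow_neg hx0'.le]
      nth_rewrite 2 [← Real.rpow_one x]
      rw [← Real.rpow_add hx0']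
      congr 1; ring
    have hlA' : l * ∫ ω, (∑ t, w t ω) ^ (2*(k-1)) ∂μ ≤ 2 * rosC (k-1) * x ^ ((k:ℝ)/2) := by
      calc l * ∫ ω, (∑ t, w t ω) ^ (2*(k-1)) ∂μ ≤ l * (rosC (k-1) * (2 * x ^ (k-1))) :=
            mul_le_mul_of_nonneg_left hA' hl0.le
        _ = 2 * rosC (k-1) * (l * x ^ (k-1)) := by ring
        _ = 2 * rosC (k-1) * x ^ ((k:ℝ)/2) := by rw [hlA]
    have hlB' : l⁻¹ * ∫ ω, (∑ t, w t ω) ^ 2 ∂μ ≤ 2 * rosC 1 * x ^ ((k:ℝ)/2) := by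
      have hli : (0:ℝ) ≤ l⁻¹ := inv_nonneg.2 hl0.le
      calc l⁻¹ * ∫ ω, (∑ t, w t ω) ^ 2 ∂μ ≤ l⁻¹ * (2 * rosC 1 * x) :=
            mul_le_mul_of_nonneg_left hB hli
        _ = 2 * rosC 1 * (l⁻¹ * x) := by ring
        _ = 2 * rosC 1 * x ^ ((k:ℝ)/2) := by rw [hlB]
    calc ∫ ω, |∑ t, w t ω| ^ k ∂μ
        ≤ (l * ∫ ω, (∑ t, w t ω) ^ (2*(k-1)) ∂μ + l⁻¹ * ∫ ω, (∑ t, w t ω) ^ 2 ∂μ) / 2 := h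
      _ ≤ (2 * rosC (k-1) * x ^ ((k:ℝ)/2) + 2 * rosC 1 * x ^ ((k:ℝ)/2)) / 2 := by linarith
      _ = (rosC (k-1) + rosC 1) * x ^ ((k:ℝ)/2) := by ring
      _ ≤ (rosC (k-1) + 2 * rosC 1 + 1) * (x ^ ((k:ℝ)/2) + x) := by nlinarith

end AvgNoiseAux

open AvgNoiseAux

/-- **Moment bounds for the normalized averaged noise** (claim (A.44) in the proof of
Lemma D.1).  Let `w⁽¹⁾,…,w⁽ᵀ⁾` be i.i.d. real random variables with mean zero, `|w| ≤ 1`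
almost surely and `E w² ≤ ρ`, and set `q = √(nρ)` and `w̃ = (√T q)⁻¹ ∑ₜ w⁽ᵗ⁾`.  Then
`E w̃² ≤ 1/n`, and for every `k ≥ 3` there exists a constant `C_k` depending only on `k`
such that `E|w̃|ᵏ ≤ C_k (n⁻¹ (T q²)^{-(k-2)/2} + n⁻¹ n^{-(k-2)/2})`. -/
theorem averaged_noise_moment_bounds :
    (∀ (Ω : Type) [MeasurableSpace Ω] (μ : Measure Ω) [IsProbabilityMeasure μ]
        (n T : ℕ) (ρ : ℝ) (w : Fin T → Ω → ℝ),
      1 ≤ n → 1 ≤ T → ρ ∈ Set.Ioc (0 : ℝ) 1 →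
      (∀ t, Measurable (w t)) →
      iIndepFun w μ →
      (∀ t t', IdentDistrib (w t) (w t') μ μ) →
      (∀ t, ∫ ω, w t ω ∂μ = 0) →
      (∀ t, ∀ᵐ ω ∂μ, |w t ω| ≤ 1) →
      (∀ t, ∫ ω, (w t ω) ^ 2 ∂μ ≤ ρ) →
      ∫ ω, ((∑ t, w t ω) / (Real.sqrt T * Real.sqrt (n * ρ))) ^ 2 ∂μ ≤ 1 / n) ∧
    (∀ k : ℕ, 3 ≤ k → ∃ C : ℝ, 0 < C ∧
      ∀ (Ω : Type) [MeasurableSpace Ω] (μ : Measure Ω) [IsProbabilityMeasure μ]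
          (n T : ℕ) (ρ : ℝ) (w : Fin T → Ω → ℝ),
        1 ≤ n → 1 ≤ T → ρ ∈ Set.Ioc (0 : ℝ) 1 →
        (∀ t, Measurable (w t)) →
        iIndepFun w μ →
        (∀ t t', IdentDistrib (w t) (w t') μ μ) →
        (∀ t, ∫ ω, w t ω ∂μ = 0) →
        (∀ t, ∀ᵐ ω ∂μ, |w t ω| ≤ 1) →
        (∀ t, ∫ ω, (w t ω) ^ 2 ∂μ ≤ ρ) →
        ∫ ω, |(∑ t, w t ω) / (Real.sqrt T * Real.sqrt (n * ρ))| ^ k ∂μ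
          ≤ C * ((1 / n) * (((T : ℝ) * ((n : ℝ) * ρ)) ^ (-(((k : ℝ) - 2) / 2)))
              + (1 / n) * ((n : ℝ) ^ (-(((k : ℝ) - 2) / 2))))) := by
  constructor
  · intro Ω _ μ _ n T ρ w hn hT hρ hmeas hindep hident hmean hbdd hvar
    have hρ0 : 0 < ρ := hρ.1
    have hT0 : (0:ℝ) < (T:ℝ) := by exact_mod_cast Nat.pos_of_ne_zero (by omega)
    have hn0 : (0:ℝ) < (n:ℝ) := by exact_mod_cast Nat.pos_of_ne_zero (by omega)
    have hc2 : (Real.sqrt T * Real.sqrt (n * ρ)) ^ 2 = (T:ℝ) * ((n:ℝ) * ρ) := by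
      rw [mul_pow, Real.sq_sqrt hT0.le, Real.sq_sqrt (by positivity)]
    have hS2 : ∫ ω, (∑ t, w t ω) ^ 2 ∂μ ≤ (T:ℝ) * ρ := by
      rw [var_sum hmeas hindep hmean hbdd]
      calc ∑ t : Fin T, ∫ ω, (w t ω) ^ 2 ∂μ ≤ ∑ _t : Fin T, ρ :=
            Finset.sum_le_sum fun t _ => hvar t
        _ = (T:ℝ) * ρ := by simp [mul_comm]
    have hpt : ∀ ω, ((∑ t, w t ω) / (Real.sqrt T * Real.sqrt (n * ρ))) ^ 2
        = (∑ t, w t ω) ^ 2 / ((T:ℝ) * ((n:ℝ) * ρ)) := by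
      intro ω
      rw [div_pow, hc2]
    simp_rw [hpt]
    rw [integral_div]
    have hden : (0:ℝ) < (T:ℝ) * ((n:ℝ) * ρ) := by positivity
    have h1 : (∫ ω, (∑ t, w t ω) ^ 2 ∂μ) / ((T:ℝ) * ((n:ℝ) * ρ))
        ≤ ((T:ℝ) * ρ) / ((T:ℝ) * ((n:ℝ) * ρ)) := by
      exact div_le_div_of_nonneg_right hS2 hden.le
    have h2 : ((T:ℝ) * ρ) / ((T:ℝ) * ((n:ℝ) * ρ)) = 1 / (n:ℝ) := by
      field_simp
    rw [h2] at h1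
    exact h1
  · intro k hk
    refine ⟨rosC (k-1) + 2 * rosC 1 + 1,
      by have h1 := rosC_pos (k-1); have h2 := rosC_pos 1; linarith, ?_⟩
    · have := rosC_pos (k-1); have := rosC_pos 1
      intro Ω _ μ _ n T ρ w hn hT hρ hmeas hindep hident hmean hbdd hvar
      have hρ0 : 0 < ρ := hρ.1
      have hT0 : (0:ℝ) < (T:ℝ) := by exact_mod_cast Nat.pos_of_ne_zero (by omega)
      have hn0 : (0:ℝ) < (n:ℝ) := by exact_mod_cast Nat.pos_of_ne_zero (by omega)
      set x : ℝ := (T:ℝ) * ρ with hxdef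
      have hx0 : (0:ℝ) < x := by positivity
      set y : ℝ := (T:ℝ) * ((n:ℝ) * ρ) with hydef
      have hyx : y = (n:ℝ) * x := by rw [hydef, hxdef]; ring
      have hy0 : (0:ℝ) < y := by rw [hyx]; positivity
      set c : ℝ := Real.sqrt T * Real.sqrt (n * ρ) with hcdef
      have hc0 : 0 < c := by
        apply mul_pos (Real.sqrt_pos.2 hT0) (Real.sqrt_pos.2 (by positivity))
      have hck : c ^ k = y ^ ((k:ℝ)/2) := by
        rw [hcdef, ← Real.sqrt_mul hT0.le, ← hydef, Real.sqrt_eq_rpow,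
          ← Real.rpow_natCast (y ^ (1/(2:ℝ))) k, ← Real.rpow_mul hy0.le]
        congr 1
        ring
      have habs := abs_moment hρ0.le hmeas hindep hmean hbdd hvar k hk
      rw [← hxdef] at habs
      have hpt : ∀ ω, |(∑ t, w t ω) / c| ^ k = |∑ t, w t ω| ^ k / c ^ k := by
        intro ω
        rw [abs_div, abs_of_pos hc0, div_pow]
      simp_rw [hpt]
      rw [integral_div, hck]
      set e : ℝ := ((k:ℝ) - 2) / 2 with hedef
      have key1 : x ^ ((k:ℝ)/2) / y ^ ((k:ℝ)/2) = (1/(n:ℝ)) * (n:ℝ) ^ (-e) := by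
        have hne : (n:ℝ) ^ (-(1:ℝ)) * (n:ℝ) ^ (-e) * (n:ℝ) ^ ((k:ℝ)/2) = 1 := by
          rw [← Real.rpow_add hn0, ← Real.rpow_add hn0,
            show -(1:ℝ) + -e + (k:ℝ)/2 = 0 by rw [hedef]; ring, Real.rpow_zero]
        have hn1 : (1/(n:ℝ)) = (n:ℝ) ^ (-(1:ℝ)) := by
          rw [Real.rpow_neg_one, one_div]
        rw [hyx, Real.mul_rpow hn0.le hx0.le]
        rw [div_eq_iff (by positivity), hn1]
        calc x ^ ((k:ℝ)/2)
            = ((n:ℝ) ^ (-(1:ℝ)) * (n:ℝ) ^ (-e) * (n:ℝ) ^ ((k:ℝ)/2)) * x ^ ((k:ℝ)/2) := by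
              rw [hne, one_mul]
          _ = (n:ℝ) ^ (-(1:ℝ)) * (n:ℝ) ^ (-e) * ((n:ℝ) ^ ((k:ℝ)/2) * x ^ ((k:ℝ)/2)) := by
              ring
      have key2 : x / y ^ ((k:ℝ)/2) = (1/(n:ℝ)) * y ^ (-e) := by
        have h1 : (1/(n:ℝ)) * y ^ (-e) * y ^ ((k:ℝ)/2) = x := by
          rw [mul_assoc, ← Real.rpow_add hy0,
            show -e + (k:ℝ)/2 = 1 by rw [hedef]; ring, Real.rpow_one, hyx]
          field_simp
        rw [div_eq_iff (by positivity)]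
        exact h1.symm
      have hfinal : (x ^ ((k:ℝ)/2) + x) / y ^ ((k:ℝ)/2)
          = (1/(n:ℝ)) * y ^ (-e) + (1/(n:ℝ)) * (n:ℝ) ^ (-e) := by
        rw [add_div, key1, key2]
        ring
      calc (∫ ω, |∑ t, w t ω| ^ k ∂μ) / y ^ ((k:ℝ)/2)
          ≤ ((rosC (k-1) + 2 * rosC 1 + 1) * (x ^ ((k:ℝ)/2) + x)) / y ^ ((k:ℝ)/2) := by
            apply div_le_div_of_nonneg_right habs (by positivity)
        _ = (rosC (k-1) + 2 * rosC 1 + 1) * ((x ^ ((k:ℝ)/2) + x) / y ^ ((k:ℝ)/2)) := by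
            ring
        _ = (rosC (k-1) + 2 * rosC 1 + 1) *
              ((1/(n:ℝ)) * y ^ (-e) + (1/(n:ℝ)) * (n:ℝ) ^ (-e)) := by rw [hfinal]
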